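/- Let H be a finite-dimensional complex Hilbert space, π an orthogonal projection on H (w.r.t. inner product h), η a hermitian operator, and let π_t be the orthogonal projection onto the same subspace ran(π) with respect to the deformed inner product h_t(x,y) = h((Id + tη)x, y). Then d/dt|_{t=0} π_t = π η (Id − π). -/

import Mathlib

open scoped InnerProductSpace

/-- Derivative of a family of deformed orthogonal projections.  Let `P` be the
`h`-orthogonal projection onto a subspace `W` of a finite-dimensional complex
Hilbert space, `η` hermitian, and for each `t` let `π t` be the orthogonal
projection onto `W` with respect to the deformed inner product
`h_t(x, y) = ⟪(Id + tη) x, y⟫` (encoded by: `π t` is idempotent with range `W`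
and `h_t`-self-adjoint).  If `π` is differentiable at `0` with derivative `D`
and `π 0 = P`, then `D = P ∘ η ∘ (Id − P)`. -/
theorem stmt18 {H : Type*} [NormedAddCommGroup H] [InnerProductSpace ℂ H]
    [FiniteDimensional ℂ H]
    (W : Submodule ℂ H) (P : H →L[ℂ] H)
    (hP : P = W.subtypeL.comp (W.orthogonalProjectionOnto))
    (η : H →L[ℂ] H) (hη : ∀ x y : H, ⟪η x, y⟫_ℂ = ⟪x, η y⟫_ℂ)
    (π : ℝ → (H →L[ℂ] H))
    (hidem : ∀ t, π t ∘L π t = π t)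
    (hrange : ∀ t, LinearMap.range (π t : H →ₗ[ℂ] H) = W)
    (hsa : ∀ t : ℝ, ∀ x y : H,
      ⟪(1 + ((t : ℂ) • η)) (π t x), y⟫_ℂ = ⟪(1 + ((t : ℂ) • η)) x, π t y⟫_ℂ)
    (hπ0 : π 0 = P)
    (D : H →L[ℂ] H) (hderiv : HasDerivAt π D 0) :
    D = P ∘L η ∘L (1 - P) := by
  -- pointwise derivative of π
  have happly : ∀ v : H, HasDerivAt (fun t => π t v) (D v) 0 := by
    intro v
    have := (((ContinuousLinearMap.apply ℂ H v).restrictScalars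
      ℝ).hasFDerivAt).comp_hasDerivAt 0 hderiv
    simpa [Function.comp_def] using this
  -- basic facts
  have hPPx : ∀ x, P (P x) = P x := by
    intro x
    have := congrFun (congrArg DFunLike.coe (hidem 0)) x
    simpa [hπ0] using this
  have hfix : ∀ t, ∀ w ∈ W, π t w = w := by
    intro t w hw
    rw [← hrange t] at hw
    obtain ⟨z, rfl⟩ := hw
    have := congrFun (congrArg DFunLike.coe (hidem t)) z
    simpa using this
  have hPfix : ∀ w ∈ W, P w = w := by
    intro w hw
    have := hfix 0 w hw
    rwa [hπ0] at this
  have hπW : ∀ t x, π t x ∈ W := by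
    intro t x
    rw [← hrange t]; exact LinearMap.mem_range_self _ x
  have hPsa : ∀ a b : H, ⟪P a, b⟫_ℂ = ⟪a, P b⟫_ℂ := by
    intro a b
    have := hsa 0 a b
    simpa [hπ0] using this
  -- D (P x) = 0 : the function t ↦ π t (P x) is constant
  have hDP : ∀ x, D (P x) = 0 := by
    intro x
    have h1 : HasDerivAt (fun t => π t (P x)) (D (P x)) 0 := happly (P x)
    have h2 : HasDerivAt (fun t => π t (P x)) 0 0 := by
      have he : (fun t => π t (P x)) = fun _ : ℝ => P x :=
        funext fun t => hfix t (P x) (by rw [hP]; exact (W.orthogonalProjectionOnto x).2)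
      rw [he]
      exact hasDerivAt_const 0 (P x)
    exact h1.unique h2
  -- P (D v) = D v : differentiate P (π t v) = π t v
  have hPD : ∀ v, P (D v) = D v := by
    intro v
    have h1 : HasDerivAt (fun t => P (π t v)) (P (D v)) 0 := by
      have := ((P.restrictScalars ℝ).hasFDerivAt).comp_hasDerivAt 0 (happly v)
      simpa [Function.comp_def] using this
    have h2 : HasDerivAt (fun t => P (π t v)) (D v) 0 := by
      have he : (fun t => P (π t v)) = fun t => π t v :=
        funext fun t => hPfix _ (hπW t v)
      rw [he]; exact happly v
    exact h1.unique h2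
  -- derivative of t ↦ (t : ℂ)
  have hofreal : HasDerivAt (fun t : ℝ => (t : ℂ)) 1 0 := by
    simpa using (hasDerivAt_id (0 : ℝ)).ofReal_comp
  -- key identity from differentiating hsa
  have key : ∀ x y : H, ⟪D x + η (P x), y⟫_ℂ = ⟪x, D y⟫_ℂ + ⟪η x, P y⟫_ℂ := by
    intro x y
    have hηπ : HasDerivAt (fun t => η (π t x)) (η (D x)) 0 := by
      have := ((η.restrictScalars ℝ).hasFDerivAt).comp_hasDerivAt 0 (happly x)
      simpa [Function.comp_def] using this
    have hu : HasDerivAt (fun t : ℝ => (1 + ((t : ℂ) • η)) (π t x)) (D x + η (P x)) 0 := by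
      have h := (happly x).fun_add (hofreal.fun_smul hηπ)
      have he : (fun t : ℝ => (1 + ((t : ℂ) • η)) (π t x))
          = fun t : ℝ => π t x + (t : ℂ) • η (π t x) := by
        funext t; simp
      rw [he]
      simpa [hπ0] using h
    have hv : HasDerivAt (fun t : ℝ => (1 + ((t : ℂ) • η)) x) (η x) 0 := by
      have h := (hasDerivAt_const (0 : ℝ) x).fun_add (hofreal.smul_const (η x))
      have he : (fun t : ℝ => (1 + ((t : ℂ) • η)) x)
          = fun t : ℝ => x + (t : ℂ) • η x := by
        funext t; simp
      rw [he]
      simpa using h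
    have hL : HasDerivAt (fun t : ℝ => ⟪(1 + ((t : ℂ) • η)) (π t x), y⟫_ℂ)
        (⟪D x + η (P x), y⟫_ℂ) 0 := by
      have := hu.inner ℂ (hasDerivAt_const (0 : ℝ) y)
      convert this using 1
      · rfl
      · simp [inner_add_left]
    have hR : HasDerivAt (fun t : ℝ => ⟪(1 + ((t : ℂ) • η)) (π t x), y⟫_ℂ)
        (⟪x, D y⟫_ℂ + ⟪η x, P y⟫_ℂ) 0 := by
      have h := hv.inner ℂ (happly y)
      have he : (fun t : ℝ => ⟪(1 + ((t : ℂ) • η)) (π t x), y⟫_ℂ)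
          = fun t : ℝ => ⟪(1 + ((t : ℂ) • η)) x, π t y⟫_ℂ :=
        funext fun t => hsa t x y
      rw [he]
      convert h using 1
      · rfl
      · simp [hπ0]
    exact hL.unique hR
  -- conclude
  ext x
  apply ext_inner_right ℂ
  intro y
  have hPx : P (x - P x) = 0 := by
    simp [map_sub, hPPx x]
  have hDx : D (x - P x) = D x := by
    simp [map_sub, hDP x]
  have h0 : ⟪x - P x, D y⟫_ℂ = 0 := by
    rw [← hPD y, ← hPsa, hPx, inner_zero_left]
  have hk := key (x - P x) y
  rw [hPx, hDx, h0, zero_add] at hk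
  simp only [map_zero, inner_zero_left, add_zero] at hk
  -- hk : ⟪D x, y⟫ = ⟪η (x - P x), P y⟫
  simp only [ContinuousLinearMap.comp_apply, ContinuousLinearMap.sub_apply,
    ContinuousLinearMap.one_apply]
  rw [hPsa]
  exact hk
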